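/- Let L be a symmetric positive semidefinite d×d real matrix, let S be a proper sampling on {1,…,d} with sketch C, and set C̄ = L^{1/2} C L^{†1/2}. Then E[ L^{1/2} (C̄ − I)ᵀ (C̄ − I) L^{1/2} ] = L^{1/2} L^{†1/2} (P̃ ∘ L) L^{†1/2} L^{1/2}, where P̃ = P̄ − E, P̄ has entries p_{jl}/(p_j p_l), and E is the all-ones matrix. -/

import Mathlib

open scoped BigOperators RealInnerProductSpace
open Matrix

noncomputable section

/-- A proper sampling on `{1,…,d}`: a finitely supported probability distribution over
subsets of `Fin d` whose marginal probabilities are all positive. -/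
structure Sampling (d : ℕ) where
  prob : Finset (Fin d) → ℝ
  nonneg : ∀ S, 0 ≤ prob S
  total : ∑ S : Finset (Fin d), prob S = 1
  margPos : ∀ j : Fin d, 0 < ∑ S : Finset (Fin d), if j ∈ S then prob S else 0

namespace Sampling

variable {d : ℕ} (μ : Sampling d)

/-- Marginal probability `p_j = Prob(j ∈ S)`. -/
def marg (j : Fin d) : ℝ := ∑ S : Finset (Fin d), if j ∈ S then μ.prob S else 0

/-- Probability matrix `P`, with entries `p_{jl} = Prob({j,l} ⊆ S)`. -/
def probMatrix : Matrix (Fin d) (Fin d) ℝ :=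
  Matrix.of fun j l => ∑ S : Finset (Fin d), if j ∈ S ∧ l ∈ S then μ.prob S else 0

/-- The matrix `P̄` with entries `p_{jl}/(p_j p_l)`. -/
def Pbar : Matrix (Fin d) (Fin d) ℝ :=
  Matrix.of fun j l => μ.probMatrix j l / (μ.marg j * μ.marg l)

/-- The matrix `P̃ = P̄ − E` where `E` is the all-ones matrix. -/
def Ptilde : Matrix (Fin d) (Fin d) ℝ := μ.Pbar - Matrix.of fun _ _ => (1 : ℝ)

/-- The unbiased diagonal sketch `C` associated with a realization `S` of the sampling. -/
def sketch (S : Finset (Fin d)) : Matrix (Fin d) (Fin d) ℝ :=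
  Matrix.diagonal fun j => if j ∈ S then (μ.marg j)⁻¹ else 0

end Sampling

/-- Largest eigenvalue of a symmetric matrix, via the Rayleigh quotient. -/
def lambdaMax {d : ℕ} (M : Matrix (Fin d) (Fin d) ℝ) : ℝ :=
  sSup {r : ℝ | ∃ v : Fin d → ℝ, v ⬝ᵥ v = 1 ∧ r = v ⬝ᵥ M.mulVec v}

/-- Smallest eigenvalue of a symmetric matrix, via the Rayleigh quotient. -/
def lambdaMin {d : ℕ} (M : Matrix (Fin d) (Fin d) ℝ) : ℝ :=
  sInf {r : ℝ | ∃ v : Fin d → ℝ, v ⬝ᵥ v = 1 ∧ r = v ⬝ᵥ M.mulVec v}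

/-- `Mdag` is the Moore–Penrose pseudoinverse of `M`. -/
def IsMoorePenrose {m n : Type*} [Fintype m] [Fintype n]
    (M : Matrix m n ℝ) (Mdag : Matrix n m ℝ) : Prop :=
  M * Mdag * M = M ∧ Mdag * M * Mdag = Mdag ∧
    (M * Mdag)ᵀ = M * Mdag ∧ (Mdag * M)ᵀ = Mdag * M

/-- Vectors in `ℝ^d` with the Euclidean inner product. -/
abbrev Vec (d : ℕ) := EuclideanSpace ℝ (Fin d)

/-- Action of a matrix on a Euclidean vector. -/
def mact {d e : ℕ} (M : Matrix (Fin e) (Fin d) ℝ) (x : Vec d) : Vec e :=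
  Matrix.toEuclideanLin M x

/-- Quadratic form `xᵀ M x`, i.e. the squared `M`-seminorm `‖x‖²_M`. -/
def quad {d : ℕ} (M : Matrix (Fin d) (Fin d) ℝ) (x : Vec d) : ℝ := ⟪x, mact M x⟫

/-- `f` is `M`-smooth: `f x ≤ f y + ⟨∇f(y), x−y⟩ + ½ (x−y)ᵀ M (x−y)` for all `x, y`. -/
def MSmooth {d : ℕ} (f : Vec d → ℝ) (M : Matrix (Fin d) (Fin d) ℝ) : Prop :=
  ∀ x y : Vec d, f x ≤ f y + ⟪gradient f y, x - y⟫ + (1 / 2) * quad M (x - y)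

/-- Random iterates driven by i.i.d. draws: `traj x0 step k ω` is the `k`-th iterate along
the sample path `ω` of `k` draws. -/
def traj {V Ω : Type*} (x0 : V) (step : V → Ω → V) : ∀ k : ℕ, (Fin k → Ω) → V
  | 0, _ => x0
  | k + 1, ω => step (traj x0 step k fun i => ω i.castSucc) (ω (Fin.last k))

/-- Expectation `E[φ(x^k)]` of a functional of the `k`-th iterate, over `k` i.i.d. draws
with one-step distribution `P`. -/
def trajExp {V Ω : Type*} [Fintype Ω] (P : Ω → ℝ) (x0 : V) (step : V → Ω → V)
    (φ : V → ℝ) (k : ℕ) : ℝ :=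
  ∑ ω : Fin k → Ω, (∏ i, P (ω i)) * φ (traj x0 step k ω)



section AuxProofs

/-- If `A` is PSD and `A²` commutes with `B`, then `A` commutes with `B`. -/
lemma commute_of_sq_commute {d : ℕ} {A B : Matrix (Fin d) (Fin d) ℝ}
    (hA : A.PosSemidef) (h : (A * A) * B = B * (A * A)) : A * B = B * A := by
  have hH := hA.1
  set U : Matrix (Fin d) (Fin d) ℝ := (hH.eigenvectorUnitary : Matrix (Fin d) (Fin d) ℝ) with hU
  have hUU : star U * U = 1 := (Matrix.mem_unitaryGroup_iff').mp hH.eigenvectorUnitary.2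
  have hUU' : U * star U = 1 := (Matrix.mem_unitaryGroup_iff).mp hH.eigenvectorUnitary.2
  have can1 : ∀ Z : Matrix (Fin d) (Fin d) ℝ, star U * (U * Z) = Z := fun Z => by
    rw [← Matrix.mul_assoc, hUU, Matrix.one_mul]
  have can2 : ∀ Z : Matrix (Fin d) (Fin d) ℝ, U * (star U * Z) = Z := fun Z => by
    rw [← Matrix.mul_assoc, hUU', Matrix.one_mul]
  set f : Fin d → ℝ := hH.eigenvalues with hf
  set D : Matrix (Fin d) (Fin d) ℝ := Matrix.diagonal f with hD
  have hspec : A = U * D * star U := by simpa using hH.spectral_theorem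
  set B' : Matrix (Fin d) (Fin d) ℝ := star U * B * U with hB'
  have hBU : B = U * B' * star U := by
    rw [hB']
    simp only [Matrix.mul_assoc, can2, hUU', Matrix.mul_one]
  have hDD : D * D * B' = B' * (D * D) := by
    have h2 := congrArg (fun M => star U * M * U) h
    rw [hspec, hBU] at h2
    simp only [Matrix.mul_assoc, can1, can2, hUU, hUU', Matrix.mul_one, Matrix.one_mul] at h2
    rw [Matrix.mul_assoc]
    exact h2
  have hent : ∀ i j, f i * B' i j = B' i j * f j := by
    intro i j
    have h3 := congrFun (congrFun hDD i) j
    rw [hD] at h3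
    rw [Matrix.diagonal_mul_diagonal] at h3
    rw [Matrix.diagonal_mul, Matrix.mul_diagonal] at h3
    have hfi := hA.eigenvalues_nonneg i
    have hfj := hA.eigenvalues_nonneg j
    have hfac : (f i - f j) * ((f i + f j) * B' i j) = 0 := by ring_nf; nlinarith [h3]
    rcases mul_eq_zero.mp hfac with h4 | h4
    · have : f i = f j := by linarith [sub_eq_zero.mp h4]
      rw [this, mul_comm]
    · rcases mul_eq_zero.mp h4 with h5 | h5
      · have hfi0 : f i = 0 := by simp only [hf] at *; linarith
        have hfj0 : f j = 0 := by simp only [hf] at *; linarith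
        rw [hfi0, hfj0, zero_mul, mul_zero]
      · rw [h5, zero_mul, mul_zero]
  have hDB : D * B' = B' * D := by
    ext i j
    rw [hD, Matrix.diagonal_mul, Matrix.mul_diagonal]
    exact hent i j
  have hAB : A * B = U * (D * B') * star U := by
    rw [hspec, hBU]
    simp only [Matrix.mul_assoc, can1]
  have hBA : B * A = U * (B' * D) * star U := by
    rw [hspec, hBU]
    simp only [Matrix.mul_assoc, can1]
  rw [hAB, hBA, hDB]

end AuxProofs

/-- with `C̄ = L^{1/2} C L^{†1/2}`,
`E[L^{1/2} (C̄ − I)ᵀ (C̄ − I) L^{1/2}] = L^{1/2} L^{†1/2} (P̃ ∘ L) L^{†1/2} L^{1/2}`.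
Here `Lh` is the PSD square root of `L`, `Ldag` its Moore–Penrose pseudoinverse, and
`Ldh` the PSD square root of `Ldag`. -/
theorem statement2 {d : ℕ} (μ : Sampling d) (L Lh Ldag Ldh : Matrix (Fin d) (Fin d) ℝ)
    (hL : L.PosSemidef) (hLh : Lh.PosSemidef) (hLh2 : Lh * Lh = L)
    (hdag : IsMoorePenrose L Ldag) (hLdh : Ldh.PosSemidef) (hLdh2 : Ldh * Ldh = Ldag) :
    ∑ S : Finset (Fin d),
        μ.prob S • (Lh * (Lh * μ.sketch S * Ldh - 1)ᵀ * (Lh * μ.sketch S * Ldh - 1) * Lh)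
      = Lh * Ldh * Matrix.hadamard μ.Ptilde L * Ldh * Lh := by
  -- symmetry facts
  have hLsym : Lᵀ = L := by
    rw [← Matrix.conjTranspose_eq_transpose_of_trivial]; exact hL.1
  have hLhsym : Lhᵀ = Lh := by
    rw [← Matrix.conjTranspose_eq_transpose_of_trivial]; exact hLh.1
  have hLdhsym : Ldhᵀ = Ldh := by
    rw [← Matrix.conjTranspose_eq_transpose_of_trivial]; exact hLdh.1
  have hdagsym : Ldagᵀ = Ldag := by
    rw [← hLdh2, Matrix.transpose_mul, hLdhsym]
  -- commutation facts
  have c1 : L * Ldag = Ldag * L := by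
    have h1 := hdag.2.2.1
    rw [Matrix.transpose_mul, hdagsym, hLsym] at h1
    exact h1.symm
  have c2 : Lh * Ldag = Ldag * Lh :=
    commute_of_sq_commute hLh (by rw [hLh2]; exact c1)
  have c3 : Ldh * Lh = Lh * Ldh :=
    commute_of_sq_commute hLdh (by rw [hLdh2]; exact c2.symm)
  -- the key identity : Lh * Ldh * Lh = Lh
  have hM1 : Lh * Ldh * Lh = L * Ldh := by
    rw [Matrix.mul_assoc, c3, ← Matrix.mul_assoc, hLh2]
  have hM1' : Lh * Ldh * Lh = Ldh * L := by
    rw [← c3, Matrix.mul_assoc, hLh2]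
  have c4 : Ldh * L = L * Ldh := hM1'.symm.trans hM1
  have hMpsd : (Lh * Ldh * Lh).PosSemidef := by
    have h1 := hLdh.mul_mul_conjTranspose_same Lh
    rwa [hLh.1.eq] at h1
  have hM2 : (Lh * Ldh * Lh) * (Lh * Ldh * Lh) = L := by
    calc (Lh * Ldh * Lh) * (Lh * Ldh * Lh) = (Ldh * L) * (Ldh * L) := by rw [hM1']
    _ = Ldh * (L * Ldh) * L := by noncomm_ring
    _ = Ldh * (Ldh * L) * L := by rw [← c4]
    _ = (Ldh * Ldh) * (L * L) := by noncomm_ring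
    _ = (Ldag * L) * L := by rw [hLdh2]; noncomm_ring
    _ = (L * Ldag) * L := by rw [← c1]
    _ = L := hdag.1
  have hkey : Lh * Ldh * Lh = Lh := by
    open scoped MatrixOrder Matrix.Norms.L2Operator in
    refine (CFC.sq_eq_sq_iff _ _ hMpsd.nonneg hLh.nonneg).mp ?_
    rw [pow_two, pow_two, hM2, hLh2]
  have k1 : Lh * Ldh * L = L := by
    rw [← hLh2, ← Matrix.mul_assoc, hkey]
  have k2 : L * Ldh * Lh = L := by
    rw [← hLh2, Matrix.mul_assoc Lh Lh Ldh, Matrix.mul_assoc Lh (Lh * Ldh) Lh, hkey]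
  have k3 : Lh * Ldh * L * Ldh * Lh = L := by
    rw [k1, k2]
  -- expectation of the sketch is the identity
  have hE1 : ∑ S : Finset (Fin d), μ.prob S • μ.sketch S = (1 : Matrix (Fin d) (Fin d) ℝ) := by
    ext i j
    rw [Matrix.sum_apply]
    by_cases hij : i = j
    · subst hij
      simp only [Sampling.sketch, Matrix.smul_apply, Matrix.diagonal_apply_eq,
        Matrix.one_apply_eq, smul_eq_mul]
      have hm : (0 : ℝ) < μ.marg i := μ.margPos i
      calc ∑ S : Finset (Fin d), μ.prob S * (if i ∈ S then (μ.marg i)⁻¹ else 0)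
          = (∑ S : Finset (Fin d), if i ∈ S then μ.prob S else 0) * (μ.marg i)⁻¹ := by
            rw [Finset.sum_mul]
            refine Finset.sum_congr rfl fun S _ => ?_
            split <;> simp
      _ = μ.marg i * (μ.marg i)⁻¹ := rfl
      _ = 1 := mul_inv_cancel₀ (ne_of_gt hm)
    · simp [Sampling.sketch, Matrix.smul_apply, Matrix.diagonal_apply_ne _ hij,
        Matrix.one_apply_ne hij]
  -- expectation of C L C is the Hadamard product Pbar ∘ L
  have hE2 : ∑ S : Finset (Fin d), μ.prob S • (μ.sketch S * L * μ.sketch S)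
      = Matrix.hadamard μ.Pbar L := by
    ext i j
    rw [Matrix.sum_apply]
    have hterm : ∀ S : Finset (Fin d),
        (μ.prob S • (μ.sketch S * L * μ.sketch S)) i j
          = (if i ∈ S ∧ j ∈ S then μ.prob S else 0) * ((μ.marg i)⁻¹ * ((μ.marg j)⁻¹ * L i j)) := by
      intro S
      simp only [Sampling.sketch]
      rw [Matrix.smul_apply, Matrix.mul_diagonal, Matrix.diagonal_mul]
      by_cases hi : i ∈ S <;> by_cases hj : j ∈ S <;>
        simp only [hi, hj, if_true, if_false, and_true, and_false, true_and, false_and,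
          and_self, smul_eq_mul] <;> ring
    rw [Finset.sum_congr rfl fun S _ => hterm S, ← Finset.sum_mul]
    have : (∑ S : Finset (Fin d), if i ∈ S ∧ j ∈ S then μ.prob S else 0) = μ.probMatrix i j := rfl
    rw [this]
    simp only [Matrix.hadamard, Sampling.Pbar, Matrix.of_apply, div_eq_mul_inv, mul_inv]
    ring
  -- rewrite each summand
  have hsummand : ∀ S : Finset (Fin d),
      μ.prob S • (Lh * (Lh * μ.sketch S * Ldh - 1)ᵀ * (Lh * μ.sketch S * Ldh - 1) * Lh)
        = Lh * Ldh * (μ.prob S • (μ.sketch S * L * μ.sketch S)) * Ldh * Lh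
          - Lh * Ldh * (μ.prob S • μ.sketch S) * L
          - L * (μ.prob S • μ.sketch S) * Ldh * Lh
          + μ.prob S • L := by
    intro S
    have hCt : (μ.sketch S)ᵀ = μ.sketch S := by
      rw [Sampling.sketch, Matrix.diagonal_transpose]
    rw [← hLh2]
    simp only [Matrix.transpose_sub, Matrix.transpose_mul, Matrix.transpose_one, hCt,
      hLhsym, hLdhsym]
    simp only [Matrix.mul_sub, Matrix.sub_mul, Matrix.mul_one, Matrix.one_mul,
      mul_smul_comm, smul_mul_assoc, smul_sub, smul_add, Matrix.mul_assoc]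
    abel
  rw [Finset.sum_congr rfl fun S _ => hsummand S]
  rw [Finset.sum_add_distrib, Finset.sum_sub_distrib, Finset.sum_sub_distrib]
  simp only [← Finset.sum_mul, ← Finset.mul_sum, ← Finset.sum_smul]
  rw [hE1, hE2, μ.total, one_smul, Matrix.mul_one]
  -- final algebra
  have hhad : Matrix.hadamard μ.Ptilde L = Matrix.hadamard μ.Pbar L - L := by
    ext i j
    simp [Sampling.Ptilde, Matrix.hadamard, Matrix.sub_apply, sub_mul]
  simp only [Matrix.mul_one]
  rw [hhad, Matrix.mul_sub, Matrix.sub_mul, Matrix.sub_mul]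
  rw [k1, k2]
  abel

end
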